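/- Let G be a finite triangle-free simple graph on vertex set V, and let v₁, v₃ be distinct non-adjacent vertices of G such that there is no path of length 3 from v₁ to v₃, i.e., there are no vertices a, b with G.Adj v₁ a, G.Adj a b, and G.Adj b v₃. Let G' be the identification of v₁ and v₃ in G. Then G' is triangle-free: there are no three pairwise adjacent vertices in G'. -/

import Mathlib

/-- The identification of two distinct non-adjacent vertices `v₁` and `v₃` of a
simple graph `G`: the graph on the vertex set `V \ {v₃}` in which distinct
vertices `u` and `w` are adjacent iff `G.Adj u w`, or `u = v₁` and
`G.Adj v₃ w`, or `w = v₁` and `G.Adj v₃ u`. -/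
def identify {V : Type*} (G : SimpleGraph V) (v₁ v₃ : V) :
    SimpleGraph {u : V // u ≠ v₃} where
  Adj u w := u ≠ w ∧
    (G.Adj u.1 w.1 ∨ (u.1 = v₁ ∧ G.Adj v₃ w.1) ∨ (w.1 = v₁ ∧ G.Adj v₃ u.1))
  symm := ⟨by
    rintro u w ⟨h1, h2 | h2 | h2⟩
    · exact ⟨h1.symm, Or.inl h2.symm⟩
    · exact ⟨h1.symm, Or.inr (Or.inr h2)⟩
    · exact ⟨h1.symm, Or.inr (Or.inl h2)⟩⟩
  loopless := ⟨fun u h => h.1 rfl⟩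

/-- If `G` is triangle-free and there is no path of length 3 between the
distinct non-adjacent vertices `v₁` and `v₃`, then the identification of `v₁`
and `v₃` is triangle-free. -/
theorem identify_triangle_free {V : Type*} [Fintype V] (G : SimpleGraph V)
    (htf : ∀ a b c : V, ¬ (G.Adj a b ∧ G.Adj b c ∧ G.Adj a c))
    (v₁ v₃ : V) (hne : v₁ ≠ v₃) (hnadj : ¬ G.Adj v₁ v₃)
    (hpath : ¬ ∃ a b : V, G.Adj v₁ a ∧ G.Adj a b ∧ G.Adj b v₃) :
    ∀ a b c : {u : V // u ≠ v₃},
      ¬ ((identify G v₁ v₃).Adj a b ∧ (identify G v₁ v₃).Adj b c ∧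
          (identify G v₁ v₃).Adj a c) := by
  push_neg at hpath
  rintro a b c ⟨⟨hab, h1⟩, ⟨hbc, h2⟩, ⟨hac, h3⟩⟩
  have sym := fun x y (h : G.Adj x y) => h.symm
  rcases h1 with h1 | ⟨e1, h1⟩ | ⟨e1, h1⟩ <;>
  rcases h2 with h2 | ⟨e2, h2⟩ | ⟨e2, h2⟩ <;>
  rcases h3 with h3 | ⟨e3, h3⟩ | ⟨e3, h3⟩ <;>
    first
    | exact htf _ _ _ ⟨h1, h2, h3⟩
    | (subst_vars; first
        | exact htf _ _ _ ⟨h1, h2, h3⟩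
        | exact htf _ _ _ ⟨h1.symm, h3, h2⟩
        | exact htf _ _ _ ⟨h2, h3.symm, h1⟩
        | exact htf _ _ _ ⟨h1, h3, h2.symm⟩
        | exact htf _ _ _ ⟨h2.symm, h1, h3⟩
        | exact htf _ _ _ ⟨h3, h2, h1⟩
        | exact htf _ _ _ ⟨h3.symm, h1.symm, h2⟩
        | exact htf _ _ _ ⟨h1, h2.symm, h3.symm⟩
        | exact htf _ _ _ ⟨h1.symm, h3.symm, h2.symm⟩
        | exact htf _ _ _ ⟨h2, h3, h1.symm⟩
        | exact htf _ _ _ ⟨h3, h1, h2.symm⟩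
        | exact hnadj h1.symm
        | exact hnadj h2.symm
        | exact hnadj h3.symm
        | exact hpath _ _ h3 h2.symm h1.symm
        | exact hpath _ _ h1 h2 h3.symm
        | exact hpath _ _ h2 h3.symm h1.symm
        | exact hpath _ _ h3 h2 h1.symm
        | exact hpath _ _ h1 h3 h2.symm
        | exact hpath _ _ h2 h1.symm h3.symm
        | (exact absurd rfl (Subtype.coe_ne_coe.mpr hab))
        | (exact absurd rfl (Subtype.coe_ne_coe.mpr hbc))
        | (exact absurd rfl (Subtype.coe_ne_coe.mpr hac))
        | exact hpath _ _ h2.symm h1.symm h3.symm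
        | exact hpath _ _ h1.symm h3 h2.symm
        | exact hpath _ _ h3.symm h1 h2.symm
        | exact hpath _ _ h2 h3 h1.symm
        | exact hpath _ _ h1.symm h2.symm h3.symm
        | exact hpath _ _ h3.symm h2.symm h1.symm
        | exact hpath _ _ h2.symm h3.symm h1.symm
        | exact hpath _ _ h3 h1.symm h2.symm
        | exact hpath _ _ h1 h2.symm h3.symm
        | exact hpath _ _ h2 h1 h3.symm
        | exact hpath _ _ h3 h1 h2.symm
        | exact hpath _ _ h1 h3.symm h2.symm
        | exact hab (Subtype.ext (by assumption))
        | exact hbc (Subtype.ext (by assumption))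
        | exact hac (Subtype.ext (by assumption))
        | exact hab (Subtype.ext (Eq.symm (by assumption)))
        | exact hbc (Subtype.ext (Eq.symm (by assumption)))
        | exact hac (Subtype.ext (Eq.symm (by assumption))))
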